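/- Let D be a finite DAG with vertices partitioned into sources S, internal vertices I, and sinks T, and let X ⊆ I. If u is a vertex not in X and every out-neighbor of u in D either lies outside X or has no directed path to some fixed vertex j avoiding vertices outside X, then membership of the edge (u,j) in D_X depends only on whether D has a directed path from u to j whose internal vertices all lie in X. In particular, if j is a sink not adjacent to u in D and no out-neighbor of u lies in X, then (u,j) is not an edge of D_X. -/

import Mathlib

variable {V : Type*} [DecidableEq V] [Fintype V]

/-- In-neighborhood of `v` in the edge set `E`. -/
def inN (E : Finset (V × V)) (v : V) : Finset V :=
  (E.filter fun p => p.2 = v).image Prod.fst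

/-- Out-neighborhood of `v` in the edge set `E`. -/
def outN (E : Finset (V × V)) (v : V) : Finset V :=
  (E.filter fun p => p.1 = v).image Prod.snd

/-- Elimination of vertex `v`: delete `v` and add an edge from every in-neighbor
to every out-neighbor of `v` (if not already present). -/
def elimv (E : Finset (V × V)) (v : V) : Finset (V × V) :=
  (E ∪ (inN E v) ×ˢ (outN E v)).filter fun p => p.1 ≠ v ∧ p.2 ≠ v

/-- Eliminate a sequence of vertices, in order. -/
def elimSeq (E : Finset (V × V)) (σ : List V) : Finset (V × V) :=
  σ.foldl elimv E

/-- Markowitz degree of `v`: in-degree times out-degree. -/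
def mark (E : Finset (V × V)) (v : V) : ℕ :=
  (inN E v).card * (outN E v).card

/-- Cost of an elimination sequence: sum of the Markowitz degrees at the
time of each elimination. -/
def cost (E : Finset (V × V)) : List V → ℕ
  | [] => 0
  | v :: σ => mark E v + cost (elimv E v) σ

/-- The directed graph with edge set `E` is acyclic. -/
def Acyclic (E : Finset (V × V)) : Prop :=
  ∀ v : V, ¬ Relation.TransGen (fun a b => (a, b) ∈ E) v v

/-- `E` is an acyclic digraph whose vertices are partitioned into sources `S`
(no in-edges), internal vertices `I`, and sinks `T` (no out-edges). -/
def IsDAGPartition (E : Finset (V × V)) (S I T : Finset V) : Prop :=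
  Acyclic E ∧ Disjoint S I ∧ Disjoint S T ∧ Disjoint I T ∧
    S ∪ I ∪ T = Finset.univ ∧ (∀ s ∈ S, inN E s = ∅) ∧ (∀ t ∈ T, outN E t = ∅)

/-- There is a directed path from `i` to `j` all of whose internal vertices
lie in `X` (the single-edge path has no internal vertices). -/
def PathThrough (E : Finset (V × V)) (X : Finset V) (i j : V) : Prop :=
  ∃ l : List V, (∀ v ∈ l, v ∈ X) ∧ List.Chain' (fun a b => (a, b) ∈ E) (i :: (l ++ [j]))

@[simp] theorem List.chain'_cons {α : Type*} {R : α → α → Prop} {a b : α} {l : List α} :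
    List.Chain' R (a :: b :: l) ↔ R a b ∧ List.Chain' R (b :: l) := List.isChain_cons_cons

@[simp] theorem List.chain'_singleton {α : Type*} {R : α → α → Prop} (a : α) :
    List.Chain' R [a] := List.isChain_singleton a

lemma mem_inN {E : Finset (V × V)} {a v : V} : a ∈ inN E v ↔ (a, v) ∈ E := by
  simp only [inN, Finset.mem_image, Finset.mem_filter]
  constructor
  · rintro ⟨⟨x, y⟩, ⟨hx, rfl⟩, rfl⟩; exact hx
  · intro h; exact ⟨(a, v), ⟨h, rfl⟩, rfl⟩

lemma mem_outN {E : Finset (V × V)} {b v : V} : b ∈ outN E v ↔ (v, b) ∈ E := by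
  simp only [outN, Finset.mem_image, Finset.mem_filter]
  constructor
  · rintro ⟨⟨x, y⟩, ⟨hx, rfl⟩, rfl⟩; exact hx
  · intro h; exact ⟨(v, b), ⟨h, rfl⟩, rfl⟩

lemma mem_elimv {E : Finset (V × V)} {v a b : V} :
    (a, b) ∈ elimv E v ↔ (a ≠ v ∧ b ≠ v) ∧
      ((a, b) ∈ E ∨ ((a, v) ∈ E ∧ (v, b) ∈ E)) := by
  simp only [elimv, Finset.mem_filter, Finset.mem_union, Finset.mem_product,
    mem_inN, mem_outN]
  tauto

lemma acyclic_elimv {E : Finset (V × V)} (h : Acyclic E) (v : V) :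
    Acyclic (elimv E v) := by
  intro w hw
  apply h w
  rw [← Relation.transGen_idem (r := fun a b : V => (a, b) ∈ E)]
  refine Relation.TransGen.mono ?_ w w hw
  intro a b hab
  rcases (mem_elimv.mp hab).2 with he | ⟨h1, h2⟩
  · exact Relation.TransGen.single he
  · exact Relation.TransGen.tail (Relation.TransGen.single h1) h2

lemma chain_expand {E : Finset (V × V)} {v : V} :
    ∀ (l : List V) (i j : V),
      List.Chain' (fun a b => (a, b) ∈ elimv E v) (i :: (l ++ [j])) →
      ∃ l' : List V, (∀ x ∈ l', x = v ∨ x ∈ l) ∧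
        List.Chain' (fun a b => (a, b) ∈ E) (i :: (l' ++ [j]))
  | [], i, j, h => by
    simp only [List.nil_append, List.chain'_cons, List.chain'_singleton, and_true] at h
    rcases (mem_elimv.mp h).2 with he | ⟨h1, h2⟩
    · exact ⟨[], by simp, by simp [he]⟩
    · exact ⟨[v], by simp, by simp [List.chain'_cons, h1, h2]⟩
  | w :: rest, i, j, h => by
    rw [List.cons_append, List.chain'_cons] at h
    obtain ⟨hiw, hrest⟩ := h
    obtain ⟨l', hl', hc⟩ := chain_expand rest w j hrest
    rcases (mem_elimv.mp hiw).2 with he | ⟨h1, h2⟩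
    · refine ⟨w :: l', ?_, ?_⟩
      · intro x hx
        rcases List.mem_cons.mp hx with rfl | hx
        · simp
        · rcases hl' x hx with rfl | hx <;> simp [hx]
      · rw [List.cons_append, List.chain'_cons]; exact ⟨he, hc⟩
    · refine ⟨v :: w :: l', ?_, ?_⟩
      · intro x hx
        rcases List.mem_cons.mp hx with rfl | hx
        · exact Or.inl rfl
        · rcases List.mem_cons.mp hx with rfl | hx
          · simp
          · rcases hl' x hx with rfl | hx <;> simp [hx]
      · rw [List.cons_append, List.chain'_cons, List.cons_append, List.chain'_cons]
        exact ⟨h1, h2, hc⟩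

lemma chain_contract {E : Finset (V × V)} {v : V} (hvv : (v, v) ∉ E) :
    ∀ (l : List V) (i j : V), i ≠ v → j ≠ v →
      List.Chain' (fun a b => (a, b) ∈ E) (i :: (l ++ [j])) →
      ∃ l' : List V, (∀ x ∈ l', x ∈ l ∧ x ≠ v) ∧
        List.Chain' (fun a b => (a, b) ∈ elimv E v) (i :: (l' ++ [j]))
  | [], i, j, hi, hj, h => by
    simp only [List.nil_append, List.chain'_cons, List.chain'_singleton, and_true] at h
    exact ⟨[], by simp, by
      simp only [List.nil_append, List.chain'_cons, List.chain'_singleton, and_true]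
      exact mem_elimv.mpr ⟨⟨hi, hj⟩, Or.inl h⟩⟩
  | [w], i, j, hi, hj, h => by
    rw [List.cons_append, List.chain'_cons] at h
    obtain ⟨hiw, hrest⟩ := h
    simp only [List.nil_append, List.chain'_cons, List.chain'_singleton, and_true] at hrest
    by_cases hw : w = v
    · subst hw
      exact ⟨[], by simp, by
        simp only [List.nil_append, List.chain'_cons, List.chain'_singleton, and_true]
        exact mem_elimv.mpr ⟨⟨hi, hj⟩, Or.inr ⟨hiw, hrest⟩⟩⟩
    · refine ⟨[w], by simp [hw], ?_⟩
      simp only [List.cons_append, List.nil_append, List.chain'_cons,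
        List.chain'_singleton, and_true]
      exact ⟨mem_elimv.mpr ⟨⟨hi, hw⟩, Or.inl hiw⟩,
        mem_elimv.mpr ⟨⟨hw, hj⟩, Or.inl hrest⟩⟩
  | w :: w2 :: rest, i, j, hi, hj, h => by
    rw [List.cons_append, List.chain'_cons] at h
    obtain ⟨hiw, hrest⟩ := h
    by_cases hw : w = v
    · rw [List.cons_append, List.chain'_cons] at hrest
      obtain ⟨hvw2', hrest2⟩ := hrest
      have hiw' : (i, v) ∈ E := hw ▸ hiw
      have hvw2 : (v, w2) ∈ E := hw ▸ hvw2'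
      have hw2 : w2 ≠ v := by rintro rfl; exact hvv hvw2
      obtain ⟨l', hl', hc⟩ := chain_contract hvv rest w2 j hw2 hj hrest2
      refine ⟨w2 :: l', ?_, ?_⟩
      · intro x hx
        rcases List.mem_cons.mp hx with rfl | hx
        · exact ⟨by simp, hw2⟩
        · exact ⟨by simp [(hl' x hx).1], (hl' x hx).2⟩
      · rw [List.cons_append, List.chain'_cons]
        exact ⟨mem_elimv.mpr ⟨⟨hi, hw2⟩, Or.inr ⟨hiw', hvw2⟩⟩, hc⟩
    · obtain ⟨l', hl', hc⟩ := chain_contract hvv (w2 :: rest) w j hw hj hrest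
      refine ⟨w :: l', ?_, ?_⟩
      · intro x hx
        rcases List.mem_cons.mp hx with rfl | hx
        · exact ⟨by simp, hw⟩
        · have := (hl' x hx).1
          exact ⟨List.mem_cons_of_mem _ this, (hl' x hx).2⟩
      · rw [List.cons_append, List.chain'_cons]
        exact ⟨mem_elimv.mpr ⟨⟨hi, hw⟩, Or.inl hiw⟩, hc⟩

lemma pathThrough_elimv {E : Finset (V × V)} {v : V} (hvv : (v, v) ∉ E)
    {Y : Finset V} {u j : V} (hu : u ≠ v) (hj : j ≠ v) :
    PathThrough (elimv E v) Y u j ↔ PathThrough E (insert v Y) u j := by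
  constructor
  · rintro ⟨l, hl, hc⟩
    obtain ⟨l', hl', hc'⟩ := chain_expand l u j hc
    refine ⟨l', fun x hx => ?_, hc'⟩
    rcases hl' x hx with rfl | hx
    · exact Finset.mem_insert_self _ _
    · exact Finset.mem_insert_of_mem (hl x hx)
  · rintro ⟨l, hl, hc⟩
    obtain ⟨l', hl', hc'⟩ := chain_contract hvv l u j hu hj hc
    refine ⟨l', fun x hx => ?_, hc'⟩
    obtain ⟨hxl, hxv⟩ := hl' x hx
    rcases Finset.mem_insert.mp (hl x hxl) with rfl | h
    · exact absurd rfl hxv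
    · exact h

lemma acyclic_no_loop {E : Finset (V × V)} (h : Acyclic E) (v : V) : (v, v) ∉ E :=
  fun hv => h v (Relation.TransGen.single hv)

lemma elimSeq_mem :
    ∀ (σ : List V) (E : Finset (V × V)), Acyclic E → ∀ (u j : V), u ∉ σ → j ∉ σ →
      ((u, j) ∈ elimSeq E σ ↔ PathThrough E σ.toFinset u j)
  | [], E, hac, u, j, hu, hj => by
    simp only [elimSeq, List.foldl_nil, List.toFinset_nil]
    constructor
    · intro h
      exact ⟨[], by simp, by simp [h]⟩
    · rintro ⟨l, hl, hc⟩
      match l with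
      | [] => simpa using hc
      | x :: _ => simpa using hl x (by simp)
  | v :: σ, E, hac, u, j, hu, hj => by
    have hu' : u ∉ σ := fun h => hu (List.mem_cons_of_mem _ h)
    have hj' : j ∉ σ := fun h => hj (List.mem_cons_of_mem _ h)
    have huv : u ≠ v := fun h => hu (h ▸ List.mem_cons_self)
    have hjv : j ≠ v := fun h => hj (h ▸ List.mem_cons_self)
    have : elimSeq E (v :: σ) = elimSeq (elimv E v) σ := rfl
    rw [this, elimSeq_mem σ (elimv E v) (acyclic_elimv hac v) u j hu' hj',
      List.toFinset_cons]
    exact pathThrough_elimv (acyclic_no_loop hac v) huv hjv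

/-- if `u ∉ X` and every out-neighbor of `u` either lies outside
`X` or has no directed path to `j` staying within `X`, then `(u,j) ∈ D_X` iff
`D` has a directed path from `u` to `j` with internal vertices in `X`.
In particular, if `j` is a sink not adjacent to `u` and no out-neighbor of `u`
lies in `X`, then `(u,j)` is not an edge of `D_X`. -/
theorem elimSeq_edge_local_criterion (E : Finset (V × V)) (S I T : Finset V)
    (hD : IsDAGPartition E S I T) (X : Finset V) (hX : X ⊆ I)
    (u j : V) (hu : u ∉ X) (hj : j ∉ X)
    (σ : List V) (hσ : σ.Nodup) (hσX : σ.toFinset = X)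
    (hmain : ∀ w : V, (u, w) ∈ E → w ∉ X ∨ ¬ PathThrough E X w j) :
    ((u, j) ∈ elimSeq E σ ↔ PathThrough E X u j) ∧
    (outN E j = ∅ → (u, j) ∉ E → (∀ w : V, (u, w) ∈ E → w ∉ X) →
      (u, j) ∉ elimSeq E σ) := by
  have hu' : u ∉ σ := fun h => hu (hσX ▸ List.mem_toFinset.mpr h)
  have hj' : j ∉ σ := fun h => hj (hσX ▸ List.mem_toFinset.mpr h)
  have hiff : (u, j) ∈ elimSeq E σ ↔ PathThrough E X u j := by
    rw [elimSeq_mem σ E hD.1 u j hu' hj', hσX]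
  refine ⟨hiff, fun _ huj hout h => ?_⟩
  obtain ⟨l, hl, hc⟩ := hiff.mp h
  match l with
  | [] => exact huj (by simpa using hc)
  | w :: _ =>
    have hw : (u, w) ∈ E := (List.chain'_cons.mp hc).1
    exact hout w hw (hl w (by simp))
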